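/- The structure maps γ : C(k) ⊗ C(n₁) ⊗ ⋯ ⊗ C(n_k) → C(n₁ + ⋯ + n_k), defined by γ(f; g₁,…,g_k)(a₀ ⊗ ⋯ ⊗ a_{N+1}) = f(a₀ ⊗ g₁(1 ⊗ a_{1,n₁} ⊗ 1) ⊗ ⋯ ⊗ g_k(1 ⊗ a_{N_{k-1}+1,N_k} ⊗ 1) ⊗ a_{N+1}), are well-defined: γ(f; g₁,…,g_k) is again X-linear. -/

import Mathlib

open TensorProduct

noncomputable section ModuleAlgebraDeligne

universe u

variable (K A H : Type u)

/-- An `H`-module-algebra structure on `A`: an `H`-action by `K`-linear maps making `A`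
an `H`-module, such that multiplication and unit of `A` are `H`-linear
(the Sweedler sum `∑ (b₍₁₎a₁)(b₍₂₎a₂)` is expressed via `Coalgebra.comul`). -/
structure ModAlg [Field K] [Ring A] [Algebra K A] [Ring H] [Bialgebra K H] where
  act : H →ₗ[K] A →ₗ[K] A
  act_one : ∀ a : A, act 1 a = a
  act_mul : ∀ (b c : H) (a : A), act (b * c) a = act b (act c a)
  act_unit : ∀ b : H, act b (1 : A) = (Coalgebra.counit (R := K) b) • (1 : A)
  act_alg : ∀ (b : H) (a₁ a₂ : A),
    act b (a₁ * a₂) =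
      LinearMap.mul' K A
        ((TensorProduct.homTensorHomMap (RingHom.id K) A A A A)
          (TensorProduct.map act act (Coalgebra.comul (R := K) b)) (a₁ ⊗ₜ[K] a₂))

variable [Field K] [Ring A] [Algebra K A] [Ring H] [Bialgebra K H]

/-- The defining formula of the crossed product multiplication on `X = A ⊗ A ⊗ H`:
`(a₁ ⊗ a₁' ⊗ b¹)(a₂ ⊗ a₂' ⊗ b²) = ∑ a₁(b¹₍₁₎a₂) ⊗ (b¹₍₃₎a₂')a₁' ⊗ b¹₍₂₎b²`. -/
def XMulFormula (act : H →ₗ[K] A →ₗ[K] A)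
    (mul : (A ⊗[K] (A ⊗[K] H)) →ₗ[K] (A ⊗[K] (A ⊗[K] H)) →ₗ[K] (A ⊗[K] (A ⊗[K] H))) :
    Prop :=
  ∀ (a₁ a₁' : A) (b₁ : H) (a₂ a₂' : A) (b₂ : H),
    mul (a₁ ⊗ₜ[K] (a₁' ⊗ₜ[K] b₁)) (a₂ ⊗ₜ[K] (a₂' ⊗ₜ[K] b₂)) =
      TensorProduct.map
        (LinearMap.mulLeft K a₁ ∘ₗ act.flip a₂)
        ((TensorProduct.map (LinearMap.mulRight K a₁' ∘ₗ act.flip a₂')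
            (LinearMap.mulRight K b₂)) ∘ₗ (TensorProduct.comm K H H).toLinearMap)
        ((LinearMap.lTensor H (Coalgebra.comul (R := K)) ∘ₗ Coalgebra.comul (R := K)) b₁)

/-- Iterated tensor power `A^{⊗(n+1)}` (so `Tpow K A n` has `n+1` tensor factors),
bundled with its module structure. -/
def TpowAux : ℕ → Σ' (T : Type u) (_ : AddCommGroup T), Module K T
  | 0 => ⟨A, inferInstance, inferInstance⟩
  | n + 1 =>
    letI T := TpowAux n
    letI : AddCommGroup T.1 := T.2.1
    letI : Module K T.1 := T.2.2
    ⟨A ⊗[K] T.1, inferInstance, inferInstance⟩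

/-- `Tpow K A n = A^{⊗(n+1)}`. -/
def Tpow (n : ℕ) : Type u := (TpowAux K A n).1

instance instTpowAuxACG (n : ℕ) : AddCommGroup (TpowAux K A n).1 := (TpowAux K A n).2.1
instance instTpowAuxMod (n : ℕ) : Module K (TpowAux K A n).1 := (TpowAux K A n).2.2
instance (n : ℕ) : AddCommGroup (Tpow K A n) := (TpowAux K A n).2.1
instance (n : ℕ) : Module K (Tpow K A n) := (TpowAux K A n).2.2

/-- Cast between equal tensor powers (identity when `m = n`, junk `0` otherwise). -/
def tmap (m n : ℕ) : Tpow K A m →ₗ[K] Tpow K A n :=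
  if h : m = n then by subst h; exact LinearMap.id else 0

/-- Left multiplication by an element of `A` on the first tensor factor. -/
def lmulL : ∀ n : ℕ, A →ₗ[K] Tpow K A n →ₗ[K] Tpow K A n
  | 0 => LinearMap.mul K A
  | n + 1 =>
    (LinearMap.rTensorHom (R := K) (M := Tpow K A n) (N := A) (P := A)) ∘ₗ
      LinearMap.mul K A

/-- Right multiplication by an element of `A` on the last tensor factor. -/
def rmulL : ∀ n : ℕ, A →ₗ[K] Tpow K A n →ₗ[K] Tpow K A n
  | 0 => (LinearMap.mul K A).flip
  | n + 1 =>
    (LinearMap.lTensorHom (R := K) (M := A) (N := Tpow K A n) (P := Tpow K A n)) ∘ₗ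
      rmulL n

/-- Componentwise action of `H^{⊗(n+1)}` on `A^{⊗(n+1)}` induced by an action of `H` on `A`. -/
def tact (act : H →ₗ[K] A →ₗ[K] A) :
    ∀ n : ℕ, Tpow K H n →ₗ[K] Tpow K A n →ₗ[K] Tpow K A n
  | 0 => act
  | n + 1 =>
    (TensorProduct.homTensorHomMap (RingHom.id K) A (Tpow K A n) A (Tpow K A n)) ∘ₗ
      TensorProduct.map act (tact act n)

/-- Iterated comultiplication `Δⁿ : H → H^{⊗(n+1)}`. -/
def itComul : ∀ n : ℕ, H →ₗ[K] Tpow K H n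
  | 0 => LinearMap.id
  | n + 1 => LinearMap.lTensor H (itComul n) ∘ₗ Coalgebra.comul (R := K)

/-- The action of the pure tensor `a ⊗ a' ⊗ b ∈ X = A ⊗ A ⊗ H` on `A^{⊗(n+1)}`:
`(a ⊗ a' ⊗ b)(a₀ ⊗ ⋯ ⊗ aₙ) = ∑ a b₍₁₎a₀ ⊗ b₍₂₎a₁ ⊗ ⋯ ⊗ b₍ₙ₊₁₎aₙ a'`. -/
def xActP (act : H →ₗ[K] A →ₗ[K] A) (n : ℕ) (a a' : A) (b : H) :
    Tpow K A n →ₗ[K] Tpow K A n :=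
  lmulL K A n a ∘ₗ rmulL K A n a' ∘ₗ tact K A H act n (itComul K H n b)

/-- `X`-linearity (equivariance with respect to all pure tensors of `X = A ⊗ A ⊗ H`)
of a degree-`m` Hopf-Hochschild cochain `g : A^{⊗(m+2)} → A`. -/
def IsXLinear (act : H →ₗ[K] A →ₗ[K] A) (m : ℕ) (g : Tpow K A (m + 1) →ₗ[K] A) : Prop :=
  ∀ (a a' : A) (b : H) (t : Tpow K A (m + 1)),
    g (xActP K A H act (m + 1) a a' b t) = a * act b (g t) * a'

/-- Append an element of `A` as a new last tensor factor. -/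
def appendA : ∀ n : ℕ, A →ₗ[K] Tpow K A n →ₗ[K] Tpow K A (n + 1)
  | 0 => (TensorProduct.mk K A A).flip
  | n + 1 =>
    (LinearMap.lTensorHom (R := K) (M := A) (N := Tpow K A n) (P := Tpow K A (n + 1))) ∘ₗ
      appendA n

/-- The "inner part" `g(1 ⊗ - ⊗ 1) : A^{⊗n} → A` of a cochain `g : A^{⊗(n+2)} → A`. -/
def innerC {n : ℕ} (g : Tpow K A (n + 2) →ₗ[K] A) : Tpow K A n →ₗ[K] A :=
  g ∘ₗ TensorProduct.mk K A (Tpow K A (n + 1)) 1 ∘ₗ appendA K A n 1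

/-- Consume the first `n+1` tensor factors of `A^{⊗(S+n+2)}` using a map `A^{⊗(n+1)} → A`,
leaving the remaining `A^{⊗(S+1)}`. -/
def consume : ∀ n S : ℕ,
    (Tpow K A n →ₗ[K] A) →ₗ[K] (Tpow K A (S + n + 1) →ₗ[K] A ⊗[K] Tpow K A S)
  | 0, S => LinearMap.rTensorHom (R := K) (M := Tpow K A S) (N := A) (P := A)
  | n + 1, S =>
    (TensorProduct.lift.equiv (RingHom.id K) A (Tpow K A (S + n + 1)) (A ⊗[K] Tpow K A S)).toLinearMap ∘ₗ
      (LinearMap.llcomp K A (Tpow K A n →ₗ[K] A)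
          (Tpow K A (S + n + 1) →ₗ[K] A ⊗[K] Tpow K A S) (consume n S)) ∘ₗ
        TensorProduct.lcurry (RingHom.id K) A (Tpow K A n) A

/-- An operadic "entry": a Hopf-Hochschild cochain of degree `m`,
i.e. a linear map `A^{⊗(m+2)} → A`. -/
def Entry : Type u := Σ' m : ℕ, Tpow K A (m + 1) →ₗ[K] A

/-- Total degree of a list of entries. -/
def sumA : List (Entry K A) → ℕ
  | [] => 0
  | e :: l => sumA l + e.1

/-- The block-substitution map underlying the operad structure maps `γ`. -/
def gammaAux : ∀ l : List (Entry K A), Tpow K A (sumA K A l) →ₗ[K] Tpow K A l.length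
  | [] => LinearMap.id
  | ⟨0, _⟩ :: _ => 0
  | ⟨n + 1, g⟩ :: l =>
    LinearMap.lTensor A (gammaAux l) ∘ₗ consume K A n (sumA K A l) (innerC K A g)

/-- The operad structure map `γ(f; g₁, …, g_k)` of the Hopf-Hochschild cochain operad. -/
def gamma (l : List (Entry K A)) (f : Tpow K A (l.length + 1) →ₗ[K] A) :
    Tpow K A (sumA K A l + 1) →ₗ[K] A :=
  f ∘ₗ LinearMap.lTensor A (gammaAux K A l)

/-- `γ(f; g₁, …, g_k)` with degree bookkeeping by casts: `f` has degree `k`,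
the result is regarded as a map on `Tpow K A M = A^{⊗(M+1)}`
(the casts are identities in every intended use, where `l.length = k`
and `M = sumA l + 1`). -/
def gammaD (k : ℕ) (f : Tpow K A (k + 1) →ₗ[K] A) (l : List (Entry K A)) (M : ℕ) :
    Tpow K A M →ₗ[K] A :=
  gamma K A l (f ∘ₗ tmap K A (l.length + 1) (k + 1)) ∘ₗ tmap K A M (sumA K A l + 1)

/-- The identity cochain `Id ∈ C(1)`, `a₀ ⊗ a₁ ⊗ a₂ ↦ a₀a₁a₂`. -/
def idC : Tpow K A 2 →ₗ[K] A :=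
  LinearMap.mul' K A ∘ₗ LinearMap.lTensor A (LinearMap.mul' K A)

/-- `Id` as an entry. -/
def idE : Entry K A := ⟨1, idC K A⟩

/-- The multiplication cochain `π ∈ C(2)`, `a₀ ⊗ a₁ ⊗ a₂ ⊗ a₃ ↦ a₀a₁a₂a₃`. -/
def piC : Tpow K A 3 →ₗ[K] A :=
  LinearMap.mul' K A ∘ₗ
    LinearMap.lTensor A (LinearMap.mul' K A ∘ₗ LinearMap.lTensor A (LinearMap.mul' K A))

/-- The face map `∂ⱼ : A^{⊗(n+2)} → A^{⊗(n+1)}` of the bar complex. -/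
def face : ∀ n j : ℕ, Tpow K A (n + 1) →ₗ[K] Tpow K A n
  | n, 0 => TensorProduct.lift (lmulL K A n)
  | 0, _ + 1 => TensorProduct.lift (lmulL K A 0)
  | n + 1, j + 1 => LinearMap.lTensor A (face n j)

/-- The bar differential `d_n = ∑_{j=0}^n (−1)ʲ ∂ⱼ : A^{⊗(n+2)} → A^{⊗(n+1)}`. -/
def barDiff (n : ℕ) : Tpow K A (n + 1) →ₗ[K] Tpow K A n :=
  ∑ j ∈ Finset.range (n + 1), (-1 : K) ^ j • face K A n j

end ModuleAlgebraDeligne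

noncomputable section GammaWD

open TensorProduct LinearMap

universe v
variable {K A H : Type v} [Field K] [Ring A] [Algebra K A] [Ring H] [Bialgebra K H]

variable (act : H →ₗ[K] A →ₗ[K] A)

/-- Componentwise action of `b` via iterated comultiplication, as a linear map in `b`. -/
def Jc (n : ℕ) : H →ₗ[K] Tpow K A n →ₗ[K] Tpow K A n :=
  tact K A H act n ∘ₗ itComul K H n

/-- The action with right multiplication by `a'` at the end. -/
def Yc (n : ℕ) (a' : A) : H →ₗ[K] Tpow K A n →ₗ[K] Tpow K A n :=
  llcomp K (Tpow K A n) (Tpow K A n) (Tpow K A n) (rmulL K A n a') ∘ₗ Jc act n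

section bistep
variable {P P' Q Q' Q'' : Type v}
  [AddCommGroup P] [Module K P] [AddCommGroup P'] [Module K P']
  [AddCommGroup Q] [Module K Q] [AddCommGroup Q'] [Module K Q']
  [AddCommGroup Q''] [Module K Q'']

/-- Combined action on a tensor product through comultiplication. -/
def bistep (u : H →ₗ[K] P →ₗ[K] P') (v : H →ₗ[K] Q →ₗ[K] Q') :
    H →ₗ[K] P ⊗[K] Q →ₗ[K] P' ⊗[K] Q' :=
  homTensorHomMap (RingHom.id K) P Q P' Q' ∘ₗ TensorProduct.map u v ∘ₗ Coalgebra.comul (R := K)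

theorem bistep_apply (u : H →ₗ[K] P →ₗ[K] P') (v : H →ₗ[K] Q →ₗ[K] Q') (b : H) :
    bistep u v b
      = homTensorHomMap (RingHom.id K) P Q P' Q'
          (TensorProduct.map u v (Coalgebra.comul (R := K) b)) := rfl

theorem lift_right (u : H →ₗ[K] P →ₗ[K] P) (v : H →ₗ[K] Q →ₗ[K] Q)
    (v' : H →ₗ[K] Q' →ₗ[K] Q') (φ : Q →ₗ[K] Q')
    (h : ∀ b : H, φ ∘ₗ v b = v' b ∘ₗ φ) (b : H) :
    lTensor P φ ∘ₗ bistep u v b = bistep u v' b ∘ₗ lTensor P φ := by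
  have key : ∀ z : H ⊗[K] H,
      lTensor P φ ∘ₗ homTensorHomMap (RingHom.id K) P Q P Q (TensorProduct.map u v z)
        = homTensorHomMap (RingHom.id K) P Q' P Q' (TensorProduct.map u v' z) ∘ₗ lTensor P φ := by
    intro z
    induction z using TensorProduct.induction_on with
    | zero => simp
    | tmul c d =>
        simp only [TensorProduct.map_tmul, homTensorHomMap_apply]
        rw [lTensor, ← TensorProduct.map_comp, id_comp, h d,
          ← comp_id (u c), TensorProduct.map_comp, comp_id]
    | add x y hx hy =>
        simp only [map_add, add_comp, comp_add, hx, hy]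
  exact key _

theorem lift_left (u : H →ₗ[K] P →ₗ[K] P) (u' : H →ₗ[K] P' →ₗ[K] P')
    (v : H →ₗ[K] Q →ₗ[K] Q) (φ : P →ₗ[K] P')
    (h : ∀ b : H, φ ∘ₗ u b = u' b ∘ₗ φ) (b : H) :
    rTensor Q φ ∘ₗ bistep u v b = bistep u' v b ∘ₗ rTensor Q φ := by
  have key : ∀ z : H ⊗[K] H,
      rTensor Q φ ∘ₗ homTensorHomMap (RingHom.id K) P Q P Q (TensorProduct.map u v z)
        = homTensorHomMap (RingHom.id K) P' Q P' Q (TensorProduct.map u' v z) ∘ₗ rTensor Q φ := by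
    intro z
    induction z using TensorProduct.induction_on with
    | zero => simp
    | tmul c d =>
        simp only [TensorProduct.map_tmul, homTensorHomMap_apply]
        rw [rTensor, ← TensorProduct.map_comp, id_comp, h c,
          ← comp_id (v d), TensorProduct.map_comp, comp_id]
    | add x y hx hy =>
        simp only [map_add, add_comp, comp_add, hx, hy]
  exact key _

/-- Post-composition on the right factor passes inside `bistep`. -/
theorem lift_post (u : H →ₗ[K] P →ₗ[K] P') (v : H →ₗ[K] Q →ₗ[K] Q') (φ : Q' →ₗ[K] Q'')
    (b : H) :
    lTensor P' φ ∘ₗ bistep u v b = bistep u (llcomp K Q Q' Q'' φ ∘ₗ v) b := by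
  have key : ∀ z : H ⊗[K] H,
      lTensor P' φ ∘ₗ homTensorHomMap (RingHom.id K) P Q P' Q' (TensorProduct.map u v z)
        = homTensorHomMap (RingHom.id K) P Q P' Q''
            (TensorProduct.map u (llcomp K Q Q' Q'' φ ∘ₗ v) z) := by
    intro z
    induction z using TensorProduct.induction_on with
    | zero => simp
    | tmul c d =>
        simp only [TensorProduct.map_tmul, homTensorHomMap_apply, comp_apply,
          llcomp_apply']
        rw [lTensor, ← TensorProduct.map_comp, id_comp]
    | add x y hx hy =>
        simp only [map_add, add_comp, comp_add, hx, hy]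
  exact key _

end bistep

section bistep2
variable {P Q R : Type v}
  [AddCommGroup P] [Module K P] [AddCommGroup Q] [Module K Q]
  [AddCommGroup R] [Module K R]

set_option maxHeartbeats 1000000 in
theorem lift_assoc (u : H →ₗ[K] P →ₗ[K] P) (v : H →ₗ[K] Q →ₗ[K] Q)
    (w : H →ₗ[K] R →ₗ[K] R) (b : H) :
    (TensorProduct.assoc K P Q R).toLinearMap ∘ₗ bistep (bistep u v) w b
      = bistep u (bistep v w) b ∘ₗ (TensorProduct.assoc K P Q R).toLinearMap := by
  have key : ∀ ζ : (H ⊗[K] H) ⊗[K] H,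
      (TensorProduct.assoc K P Q R).toLinearMap ∘ₗ
          homTensorHomMap (RingHom.id K) (P ⊗[K] Q) R (P ⊗[K] Q) R
            (TensorProduct.map (homTensorHomMap (RingHom.id K) P Q P Q ∘ₗ TensorProduct.map u v) w ζ)
        = homTensorHomMap (RingHom.id K) P (Q ⊗[K] R) P (Q ⊗[K] R)
            (TensorProduct.map u (homTensorHomMap (RingHom.id K) Q R Q R ∘ₗ TensorProduct.map v w)
              ((TensorProduct.assoc K H H H).toLinearMap ζ)) ∘ₗ
            (TensorProduct.assoc K P Q R).toLinearMap := by
    intro ζ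
    induction ζ using TensorProduct.induction_on with
    | zero => simp only [map_zero, zero_comp, comp_zero]
    | tmul z d =>
        induction z using TensorProduct.induction_on with
        | zero =>
            simp only [TensorProduct.zero_tmul, map_zero, zero_comp, comp_zero]
        | tmul c e =>
            simp only [TensorProduct.map_tmul, comp_apply, homTensorHomMap_apply,
              LinearEquiv.coe_coe, TensorProduct.assoc_tmul]
            exact (TensorProduct.map_map_comp_assoc_eq (u c) (v e) (w d)).symm
        | add x y hx hy =>
            simp only [TensorProduct.add_tmul, map_add, add_comp, comp_add, hx, hy]
    | add x y hx hy => simp only [map_add, add_comp, comp_add, hx, hy]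
  have e1 : TensorProduct.map (bistep u v) w
      = TensorProduct.map (homTensorHomMap (RingHom.id K) P Q P Q ∘ₗ TensorProduct.map u v) w ∘ₗ
          rTensor H (Coalgebra.comul (R := K)) := by
    rw [map_comp_rTensor]; rfl
  have e2 : TensorProduct.map u (bistep v w)
      = TensorProduct.map u (homTensorHomMap (RingHom.id K) Q R Q R ∘ₗ TensorProduct.map v w) ∘ₗ
          lTensor H (Coalgebra.comul (R := K)) := by
    rw [map_comp_lTensor]; rfl
  have h1 : bistep (bistep u v) w b
      = homTensorHomMap (RingHom.id K) (P ⊗[K] Q) R (P ⊗[K] Q) R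
          (TensorProduct.map (homTensorHomMap (RingHom.id K) P Q P Q ∘ₗ TensorProduct.map u v) w
            ((rTensor H (Coalgebra.comul (R := K))) (Coalgebra.comul (R := K) b))) := by
    rw [bistep_apply, e1]; rfl
  have h2 : bistep u (bistep v w) b
      = homTensorHomMap (RingHom.id K) P (Q ⊗[K] R) P (Q ⊗[K] R)
          (TensorProduct.map u (homTensorHomMap (RingHom.id K) Q R Q R ∘ₗ TensorProduct.map v w)
            ((lTensor H (Coalgebra.comul (R := K))) (Coalgebra.comul (R := K) b))) := by
    rw [bistep_apply, e2]; rfl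
  have hc : (lTensor H (Coalgebra.comul (R := K))) (Coalgebra.comul (R := K) b)
      = (TensorProduct.assoc K H H H).toLinearMap
          ((rTensor H (Coalgebra.comul (R := K))) (Coalgebra.comul (R := K) b)) :=
    (Coalgebra.coassoc_apply b).symm
  rw [h1, h2, hc]
  exact key _

end bistep2

/-- `Jc` at level `0` is the action itself. -/
theorem Jc_zero : Jc (K := K) (A := A) (H := H) act 0 = act := by
  rw [Jc]; rfl

theorem Jc_succ (n : ℕ) : Jc (K := K) (A := A) (H := H) act (n + 1)
    = bistep act (Jc act n) := by
  refine LinearMap.ext fun b => ?_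
  show (homTensorHomMap (RingHom.id K) A (Tpow K A n) A (Tpow K A n))
      ((TensorProduct.map act (tact K A H act n))
        ((lTensor H (itComul K H n)) (Coalgebra.comul (R := K) b)))
    = bistep act (Jc act n) b
  rw [← comp_apply (TensorProduct.map act (tact K A H act n)), map_comp_lTensor]
  rfl

theorem Yc_succ (n : ℕ) (a' : A) : Yc (K := K) (A := A) (H := H) act (n + 1) a'
    = bistep act (Yc act n a') := by
  refine LinearMap.ext fun b => ?_
  show lTensor A (rmulL K A n a') ∘ₗ Jc act (n + 1) b = bistep act (Yc act n a') b
  rw [Jc_succ]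
  exact lift_post act (Jc act n) (rmulL K A n a') b

theorem lmulL_one (n : ℕ) : lmulL K A n (1 : A) = LinearMap.id := by
  cases n with
  | zero => exact LinearMap.ext fun x : A => one_mul x
  | succ n =>
      show rTensor (Tpow K A n) (LinearMap.mul K A 1) = LinearMap.id
      rw [show LinearMap.mul K A 1 = LinearMap.id from LinearMap.ext fun x => one_mul x,
        rTensor_id]

theorem rmulL_one : ∀ n : ℕ, rmulL K A n (1 : A) = LinearMap.id
  | 0 => LinearMap.ext fun x : A => mul_one x
  | n + 1 => by
      show lTensor A (rmulL K A n 1) = LinearMap.id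
      rw [rmulL_one n, lTensor_id]

section unit
variable (hact1 : ∀ b : H, act b (1 : A) = (Coalgebra.counit (R := K) b) • (1 : A))
include hact1

theorem Jc_mk_one (n : ℕ) (b : H) :
    Jc act (n + 1) b ∘ₗ TensorProduct.mk K A (Tpow K A n) 1
      = TensorProduct.mk K A (Tpow K A n) 1 ∘ₗ Jc act n b := by
  rw [Jc_succ]
  have key : ∀ z : H ⊗[K] H,
      homTensorHomMap (RingHom.id K) A (Tpow K A n) A (Tpow K A n)
          (TensorProduct.map act (Jc act n) z) ∘ₗ TensorProduct.mk K A (Tpow K A n) 1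
        = TensorProduct.mk K A (Tpow K A n) 1 ∘ₗ
            Jc act n ((TensorProduct.lid K H)
              ((rTensor H (Coalgebra.counit (R := K))) z)) := by
    intro z
    induction z using TensorProduct.induction_on with
    | zero => simp only [map_zero, zero_comp, comp_zero]
    | tmul c d =>
        refine LinearMap.ext fun t => ?_
        simp only [comp_apply, TensorProduct.mk_apply, TensorProduct.map_tmul,
          homTensorHomMap_apply, rTensor_tmul, TensorProduct.lid_tmul]
        rw [hact1 c, map_smul, LinearMap.smul_apply, ← TensorProduct.smul_tmul',
          TensorProduct.tmul_smul]
    | add x y hx hy => simp only [map_add, add_comp, comp_add, hx, hy]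
  have h := key (Coalgebra.comul (R := K) b)
  rw [Coalgebra.rTensor_counit_comul (R := K) b, TensorProduct.lid_tmul, one_smul] at h
  exact h

theorem Jc_append_one : ∀ n : ℕ, ∀ b : H,
    Jc act (n + 1) b ∘ₗ appendA K A n 1 = appendA K A n 1 ∘ₗ Jc act n b
  | 0, b => by
      rw [Jc_succ]
      have key : ∀ z : H ⊗[K] H,
          homTensorHomMap (RingHom.id K) A (Tpow K A 0) A (Tpow K A 0)
              (TensorProduct.map act (Jc act 0) z) ∘ₗ appendA K A 0 1
            = appendA K A 0 1 ∘ₗ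
                act ((TensorProduct.rid K H)
                  ((lTensor H (Coalgebra.counit (R := K))) z)) := by
        intro z
        induction z using TensorProduct.induction_on with
        | zero => simp only [map_zero]; exact (zero_comp _).trans (comp_zero _).symm
        | tmul c d =>
            refine LinearMap.ext fun (x : A) => ?_
            show (TensorProduct.map (act c) (act d)) ((x : A) ⊗ₜ[K] (1 : A))
                = (act ((TensorProduct.rid K H)
                    ((lTensor H (Coalgebra.counit (R := K))) (c ⊗ₜ[K] d))) (x : A))
                    ⊗ₜ[K] (1 : A)
            rw [TensorProduct.map_tmul, hact1 d,
              lTensor_tmul, TensorProduct.rid_tmul, map_smul, LinearMap.smul_apply,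
              TensorProduct.tmul_smul, TensorProduct.smul_tmul']
        | add x y hx hy =>
            simp only [map_add]
            refine LinearMap.ext fun x => ?_
            exact (congrArg₂ (· + ·) (LinearMap.congr_fun hx x)
              (LinearMap.congr_fun hy x)).trans (map_add (appendA K A 0 1) _ _).symm
      have h := key (Coalgebra.comul (R := K) b)
      rw [Coalgebra.lTensor_counit_comul (R := K) b, TensorProduct.rid_tmul,
        one_smul] at h
      exact h
  | n + 1, b => by
      have h := Jc_append_one n
      have key' : bistep act (Jc act (n + 1)) b ∘ₗ lTensor A (appendA K A n 1)
          = lTensor A (appendA K A n 1) ∘ₗ bistep act (Jc act n) b :=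
        (lift_right act (Jc act n) (Jc act (n + 1)) (appendA K A n 1)
          (fun b => (h b).symm) b).symm
      rw [Jc_succ act (n + 1)]
      exact key'.trans (show lTensor A (appendA K A n 1) ∘ₗ bistep act (Jc act n) b
          = appendA K A (n + 1) 1 ∘ₗ Jc act (n + 1) b by rw [← Jc_succ]; rfl)

end unit

/-- Regrouping map `A^{⊗(S+n+2)} → A^{⊗(n+1)} ⊗ A^{⊗(S+1)}`. -/
def splitm : ∀ n S : ℕ, Tpow K A (S + n + 1) →ₗ[K] Tpow K A n ⊗[K] Tpow K A S
  | 0, _ => LinearMap.id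
  | n + 1, S =>
      (TensorProduct.assoc K A (Tpow K A n) (Tpow K A S)).symm.toLinearMap ∘ₗ
        lTensor A (splitm n S)

theorem consume_eq : ∀ (n S : ℕ) (φ : Tpow K A n →ₗ[K] A),
    consume K A n S φ = rTensor (Tpow K A S) φ ∘ₗ splitm (K := K) (A := A) n S
  | 0, S, φ => rfl
  | n + 1, S, φ => by
      refine TensorProduct.ext' fun x s => ?_
      show consume K A n S (TensorProduct.lcurry (RingHom.id K) A (Tpow K A n) A φ x) s
        = (rTensor (Tpow K A S) φ ∘ₗ splitm (K := K) (A := A) (n + 1) S) (x ⊗ₜ[K] s)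
      rw [consume_eq n S]
      have key : ∀ w : Tpow K A n ⊗[K] Tpow K A S,
          rTensor (Tpow K A S) (TensorProduct.lcurry (RingHom.id K) A (Tpow K A n) A φ x) w
            = rTensor (Tpow K A S) φ
                ((TensorProduct.assoc K A (Tpow K A n) (Tpow K A S)).symm
                  (x ⊗ₜ[K] w)) := by
        intro w
        induction w using TensorProduct.induction_on with
        | zero => simp only [TensorProduct.tmul_zero, map_zero]; exact (map_zero _).symm
        | tmul u q =>
            simp only [rTensor_tmul, TensorProduct.assoc_symm_tmul,
              TensorProduct.lcurry_apply]
            rfl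
        | add w₁ w₂ hw₁ hw₂ =>
            simp only [TensorProduct.tmul_add, map_add, hw₁, hw₂]
            exact (map_add _ _ _).symm
      calc (rTensor (Tpow K A S) (TensorProduct.lcurry (RingHom.id K) A (Tpow K A n) A φ x) ∘ₗ
              splitm (K := K) (A := A) n S) s
          = rTensor (Tpow K A S) φ
              ((TensorProduct.assoc K A (Tpow K A n) (Tpow K A S)).symm
                (x ⊗ₜ[K] splitm (K := K) (A := A) n S s)) := key _
        _ = (rTensor (Tpow K A S) φ ∘ₗ splitm (K := K) (A := A) (n + 1) S)
              (x ⊗ₜ[K] s) := rfl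

/-- Conjugating an intertwining identity by a linear equivalence. -/
theorem equiv_conj {M N : Type v} [AddCommGroup M] [Module K M] [AddCommGroup N]
    [Module K N] (e : M ≃ₗ[K] N) (F : M →ₗ[K] M) (G : N →ₗ[K] N)
    (h : e.toLinearMap ∘ₗ F = G ∘ₗ e.toLinearMap) :
    e.symm.toLinearMap ∘ₗ G = F ∘ₗ e.symm.toLinearMap := by
  refine LinearMap.ext fun x => ?_
  have h2 := congrArg e.symm (LinearMap.congr_fun h (e.symm x))
  simpa using h2.symm

theorem split_comm : ∀ (n S : ℕ) (a' : A) (b : H),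
    splitm (K := K) (A := A) n S ∘ₗ Yc act (S + n + 1) a' b
      = bistep (Jc act n) (Yc act S a') b ∘ₗ splitm (K := K) (A := A) n S
  | 0, S, a', b => by
      show LinearMap.id ∘ₗ Yc act (S + 1) a' b
        = bistep (Jc act 0) (Yc act S a') b ∘ₗ LinearMap.id
      rw [id_comp, comp_id, Yc_succ, Jc_zero]
      rfl
  | n + 1, S, a', b => by
      have ih := split_comm n S a'
      have step1 : lTensor A (splitm (K := K) (A := A) n S) ∘ₗ
            bistep act (Yc act (S + n + 1) a') b
          = bistep act (bistep (Jc act n) (Yc act S a')) b ∘ₗ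
              lTensor A (splitm (K := K) (A := A) n S) :=
        lift_right act (Yc act (S + n + 1) a') (bistep (Jc act n) (Yc act S a'))
          (splitm (K := K) (A := A) n S) ih b
      have step2 : (TensorProduct.assoc K A (Tpow K A n) (Tpow K A S)).symm.toLinearMap ∘ₗ
            bistep act (bistep (Jc act n) (Yc act S a')) b
          = bistep (bistep act (Jc act n)) (Yc act S a') b ∘ₗ
              (TensorProduct.assoc K A (Tpow K A n) (Tpow K A S)).symm.toLinearMap :=
        by have := equiv_conj (M := (A ⊗[K] Tpow K A n) ⊗[K] Tpow K A S)
             (N := A ⊗[K] (Tpow K A n ⊗[K] Tpow K A S))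
             (TensorProduct.assoc K A (Tpow K A n) (Tpow K A S))
             (bistep (bistep act (Jc act n)) (Yc act S a') b)
             (bistep act (bistep (Jc act n) (Yc act S a')) b)
             (lift_assoc act (Jc act n) (Yc act S a') b); exact this
      have c1 : splitm (K := K) (A := A) (n + 1) S ∘ₗ Yc act (S + (n + 1) + 1) a' b
          = (TensorProduct.assoc K A (Tpow K A n) (Tpow K A S)).symm.toLinearMap ∘ₗ
              (lTensor A (splitm (K := K) (A := A) n S) ∘ₗ
                bistep act (Yc act (S + n + 1) a') b) := by
            rw [show Yc act (S + (n + 1) + 1) a' = bistep act (Yc act (S + n + 1) a') from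
              Yc_succ act (S + n + 1) a']
            rfl
      have c5 : (bistep (bistep act (Jc act n)) (Yc act S a') b ∘ₗ
              (TensorProduct.assoc K A (Tpow K A n) (Tpow K A S)).symm.toLinearMap) ∘ₗ
                lTensor A (splitm (K := K) (A := A) n S)
          = bistep (Jc act (n + 1)) (Yc act S a') b ∘ₗ
              splitm (K := K) (A := A) (n + 1) S := by rw [← Jc_succ]; rfl
      refine c1.trans (Eq.trans ?_ c5)
      calc (TensorProduct.assoc K A (Tpow K A n) (Tpow K A S)).symm.toLinearMap ∘ₗ
              (lTensor A (splitm (K := K) (A := A) n S) ∘ₗ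
                bistep act (Yc act (S + n + 1) a') b)
          = (TensorProduct.assoc K A (Tpow K A n) (Tpow K A S)).symm.toLinearMap ∘ₗ
              (bistep act (bistep (Jc act n) (Yc act S a')) b ∘ₗ
                lTensor A (splitm (K := K) (A := A) n S)) := by rw [step1]
        _ = ((TensorProduct.assoc K A (Tpow K A n) (Tpow K A S)).symm.toLinearMap ∘ₗ
              bistep act (bistep (Jc act n) (Yc act S a')) b) ∘ₗ
                lTensor A (splitm (K := K) (A := A) n S) := rfl
        _ = (bistep (bistep act (Jc act n)) (Yc act S a') b ∘ₗ
              (TensorProduct.assoc K A (Tpow K A n) (Tpow K A S)).symm.toLinearMap) ∘ₗ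
                lTensor A (splitm (K := K) (A := A) n S) := by rw [step2]

theorem consume_comm (n S : ℕ) (φ : Tpow K A n →ₗ[K] A)
    (hφ : ∀ b : H, φ ∘ₗ Jc act n b = act b ∘ₗ φ) (a' : A) (b : H) :
    consume K A n S φ ∘ₗ Yc act (S + n + 1) a' b
      = Yc act (S + 1) a' b ∘ₗ consume K A n S φ := by
  rw [consume_eq]
  have hc : (rTensor (Tpow K A S) φ ∘ₗ splitm (K := K) (A := A) n S) ∘ₗ
        Yc act (S + n + 1) a' b
      = (bistep act (Yc act S a') b ∘ₗ rTensor (Tpow K A S) φ) ∘ₗ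
          splitm (K := K) (A := A) n S := by
   calc (rTensor (Tpow K A S) φ ∘ₗ splitm (K := K) (A := A) n S) ∘ₗ
        Yc act (S + n + 1) a' b
      = rTensor (Tpow K A S) φ ∘ₗ
          (splitm (K := K) (A := A) n S ∘ₗ Yc act (S + n + 1) a' b) := rfl
    _ = rTensor (Tpow K A S) φ ∘ₗ
          (bistep (Jc act n) (Yc act S a') b ∘ₗ splitm (K := K) (A := A) n S) := by
        rw [split_comm]
    _ = (rTensor (Tpow K A S) φ ∘ₗ bistep (Jc act n) (Yc act S a') b) ∘ₗ
          splitm (K := K) (A := A) n S := rfl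
    _ = (bistep act (Yc act S a') b ∘ₗ rTensor (Tpow K A S) φ) ∘ₗ
          splitm (K := K) (A := A) n S := by
        rw [lift_left (Jc act n) act (Yc act S a') φ hφ b]
  exact hc.trans (by rw [Yc_succ]; rfl)

theorem xActP_one_one (n : ℕ) (b : H) :
    xActP K A H act n 1 1 b = Jc act n b := by
  rw [xActP, lmulL_one, rmulL_one, id_comp, id_comp]
  rfl

theorem innerC_comm {n : ℕ} (g : Tpow K A (n + 2) →ₗ[K] A)
    (hg : IsXLinear K A H act (n + 1) g)
    (hact1 : ∀ b : H, act b (1 : A) = (Coalgebra.counit (R := K) b) • (1 : A))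
    (b : H) :
    innerC K A g ∘ₗ Jc act n b = act b ∘ₗ innerC K A g := by
  refine LinearMap.ext fun t => ?_
  have e1 : appendA K A n 1 (Jc act n b t) = Jc act (n + 1) b (appendA K A n 1 t) :=
    (LinearMap.congr_fun (Jc_append_one act hact1 n b) t).symm
  have e2 : TensorProduct.mk K A (Tpow K A (n + 1)) 1 (Jc act (n + 1) b (appendA K A n 1 t))
      = Jc act (n + 1 + 1) b
          (TensorProduct.mk K A (Tpow K A (n + 1)) 1 (appendA K A n 1 t)) :=
    (LinearMap.congr_fun (Jc_mk_one act hact1 (n + 1) b) (appendA K A n 1 t)).symm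
  have e3 := hg 1 1 b (TensorProduct.mk K A (Tpow K A (n + 1)) 1 (appendA K A n 1 t))
  rw [xActP_one_one act (n + 1 + 1) b] at e3
  calc innerC K A g (Jc act n b t)
      = g (TensorProduct.mk K A (Tpow K A (n + 1)) 1
          (appendA K A n 1 (Jc act n b t))) := rfl
    _ = g (Jc act (n + 1 + 1) b
          (TensorProduct.mk K A (Tpow K A (n + 1)) 1 (appendA K A n 1 t))) := by
        rw [e1, e2]
    _ = 1 * act b (g (TensorProduct.mk K A (Tpow K A (n + 1)) 1
          (appendA K A n 1 t))) * 1 := e3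
    _ = act b (g (TensorProduct.mk K A (Tpow K A (n + 1)) 1 (appendA K A n 1 t))) := by
        rw [one_mul, mul_one]
    _ = act b (innerC K A g t) := rfl

theorem gammaAux_comm
    (hact1 : ∀ b : H, act b (1 : A) = (Coalgebra.counit (R := K) b) • (1 : A)) :
    ∀ l : List (Entry K A), (∀ e ∈ l, IsXLinear K A H act e.1 e.2) →
      ∀ (a' : A) (b : H),
      gammaAux K A l ∘ₗ Yc act (sumA K A l) a' b
        = Yc act l.length a' b ∘ₗ gammaAux K A l
  | [], _, a', b => by
      rw [show gammaAux K A [] = LinearMap.id from rfl]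
      rfl
  | ⟨0, g⟩ :: l, _, a', b => by
      rw [show gammaAux K A (⟨0, g⟩ :: l) = 0 from rfl, zero_comp, comp_zero]
  | ⟨n + 1, g⟩ :: l, hX, a', b => by
      have hg : IsXLinear K A H act (n + 1) g := hX ⟨n + 1, g⟩ List.mem_cons_self
      have ih : ∀ b : H, gammaAux K A l ∘ₗ Yc act (sumA K A l) a' b
          = Yc act l.length a' b ∘ₗ gammaAux K A l :=
        fun b => gammaAux_comm hact1 l (fun e he => hX e (List.mem_cons_of_mem _ he)) a' b
      have hcon := consume_comm act n (sumA K A l) (innerC K A g)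
        (innerC_comm act g hg hact1) a' b
      have hlift := lift_right act (Yc act (sumA K A l) a') (Yc act l.length a')
        (gammaAux K A l) ih b
      have s2 : lTensor A (gammaAux K A l) ∘ₗ
              (consume K A n (sumA K A l) (innerC K A g) ∘ₗ
                Yc act (sumA K A l + n + 1) a' b)
          = lTensor A (gammaAux K A l) ∘ₗ (Yc act (sumA K A l + 1) a' b ∘ₗ
              consume K A n (sumA K A l) (innerC K A g)) := by rw [hcon]; rfl
      have s4 : (lTensor A (gammaAux K A l) ∘ₗ Yc act (sumA K A l + 1) a' b) ∘ₗ
              consume K A n (sumA K A l) (innerC K A g)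
          = (lTensor A (gammaAux K A l) ∘ₗ bistep act (Yc act (sumA K A l) a') b) ∘ₗ
              consume K A n (sumA K A l) (innerC K A g) := by rw [Yc_succ]; rfl
      have s5 : (lTensor A (gammaAux K A l) ∘ₗ bistep act (Yc act (sumA K A l) a') b) ∘ₗ
              consume K A n (sumA K A l) (innerC K A g)
          = (bistep act (Yc act l.length a') b ∘ₗ lTensor A (gammaAux K A l)) ∘ₗ
              consume K A n (sumA K A l) (innerC K A g) := by rw [hlift]
      have s6 : (bistep act (Yc act l.length a') b ∘ₗ lTensor A (gammaAux K A l)) ∘ₗ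
              consume K A n (sumA K A l) (innerC K A g)
          = (Yc act (l.length + 1) a' b ∘ₗ lTensor A (gammaAux K A l)) ∘ₗ
              consume K A n (sumA K A l) (innerC K A g) := by rw [Yc_succ]; rfl
      exact s2.trans (s4.trans (s5.trans s6))

theorem tmap_refl (m : ℕ) : tmap K A m m = LinearMap.id := by
  simp [tmap]

end GammaWD
/-- The operad structure maps `γ` of the Hopf-Hochschild cochain complex are
well defined: if `f ∈ C(k)` and `g₁, …, g_k` are `X`-linear cochains (of positive degrees),
then `γ(f; g₁, …, g_k)` is again `X`-linear. -/
theorem gamma_well_defined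
    {K A H : Type u} [Field K] [Ring A] [Algebra K A] [Ring H] [Bialgebra K H]
    (M : ModAlg K A H) (k : ℕ) (hk : 1 ≤ k)
    (f : Tpow K A (k + 1) →ₗ[K] A) (hf : IsXLinear K A H M.act k f)
    (l : List (Entry K A)) (hl : l.length = k)
    (hXl : ∀ e ∈ l, 1 ≤ e.1 ∧ IsXLinear K A H M.act e.1 e.2) :
    IsXLinear K A H M.act (sumA K A l)
      (gammaD K A k f l (sumA K A l + 1)) := by
  open TensorProduct LinearMap in
  subst hl
  have hact1 := M.act_unit
  have hX : ∀ e ∈ l, IsXLinear K A H M.act e.1 e.2 := fun e he => (hXl e he).2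
  intro a a' b t
  have hD : gammaD K A l.length f l (sumA K A l + 1)
      = f ∘ₗ lTensor A (gammaAux K A l) := by
    unfold gammaD gamma
    rw [tmap_refl, tmap_refl, comp_id, comp_id]
    rfl
  have h2 : lTensor A (gammaAux K A l) ∘ₗ Yc M.act (sumA K A l + 1) a' b
      = Yc M.act (l.length + 1) a' b ∘ₗ lTensor A (gammaAux K A l) := by
    rw [Yc_succ, Yc_succ]
    exact lift_right M.act (Yc M.act (sumA K A l) a') (Yc M.act l.length a')
      (gammaAux K A l) (fun b => gammaAux_comm M.act hact1 l hX a' b) b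
  have h1 : lTensor A (gammaAux K A l) ∘ₗ lmulL K A (sumA K A l + 1) a
      = lmulL K A (l.length + 1) a ∘ₗ lTensor A (gammaAux K A l) := by
    show lTensor A (gammaAux K A l) ∘ₗ
        rTensor (Tpow K A (sumA K A l)) (LinearMap.mul K A a)
      = rTensor (Tpow K A l.length) (LinearMap.mul K A a) ∘ₗ
          lTensor A (gammaAux K A l)
    rw [lTensor_comp_rTensor, rTensor_comp_lTensor]
  have e2 := LinearMap.congr_fun h2 t
  have e1 := LinearMap.congr_fun h1 (Yc M.act (sumA K A l + 1) a' b t)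
  rw [hD]
  show f (lTensor A (gammaAux K A l)
      (lmulL K A (sumA K A l + 1) a (Yc M.act (sumA K A l + 1) a' b t)))
    = a * M.act b (f (lTensor A (gammaAux K A l) t)) * a'
  rw [show lTensor A (gammaAux K A l)
        (lmulL K A (sumA K A l + 1) a (Yc M.act (sumA K A l + 1) a' b t))
      = lmulL K A (l.length + 1) a
          (lTensor A (gammaAux K A l) (Yc M.act (sumA K A l + 1) a' b t)) from e1,
    show lTensor A (gammaAux K A l) (Yc M.act (sumA K A l + 1) a' b t)
      = Yc M.act (l.length + 1) a' b (lTensor A (gammaAux K A l) t) from e2]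
  exact hf a a' b (lTensor A (gammaAux K A l) t)
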